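/- For all integers r ≥ 0 and 0 ≤ k < N, one has |β_{r,k}| ≤ 2^{−rb} and |α_{r,k}| ≤ 2^{−r(b−2)}. -/
import Mathlib


/-- Generalized binomial coefficient `C(x, r) = x (x-1) ⋯ (x-r+1) / r!`. -/
noncomputable def gbc (x : ℝ) (r : ℕ) : ℝ :=
  (∏ j ∈ Finset.range r, (x - j)) / (r.factorial : ℝ)

/-- `β_{r,k} = C(-k/N, r) (-2^(-b))^r`. -/
noncomputable def betaC (b N r k : ℕ) : ℝ :=
  gbc (-(k : ℝ) / N) r * (-(2:ℝ) ^ (-(b:ℤ))) ^ r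

/-- `α_{0,k} = 1` and `α_{r,k} = (k/(rN)) C((k+r)/N - 1, r-1) (-2^(-b))^r` for `r ≥ 1`. -/
noncomputable def alphaC (b N r k : ℕ) : ℝ :=
  if r = 0 then 1
  else ((k : ℝ) / (r * N)) * gbc (((k : ℝ) + r) / N - 1) (r - 1) * (-(2:ℝ) ^ (-(b:ℤ))) ^ r

lemma pow_le_four_pow_mul_factorial (r : ℕ) :
    ((r:ℝ))^r ≤ 4^r * r.factorial := by
  induction r with
  | zero => simp
  | succ n ih =>
    have h1 : ((n:ℝ)+1)^n ≤ 4 * (n:ℝ)^n := by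
      rcases Nat.eq_zero_or_pos n with h | h
      · subst h; norm_num
      · have hn : (0:ℝ) < n := by exact_mod_cast h
        have h2 : (n:ℝ)+1 ≤ n * Real.exp (1/n) := by
          have h := Real.add_one_le_exp (1/(n:ℝ))
          have := mul_le_mul_of_nonneg_left h (le_of_lt hn)
          calc (n:ℝ)+1 = n * (1/n + 1) := by field_simp; ring
          _ ≤ n * Real.exp (1/n) := this
        have h3 : ((n:ℝ)+1)^n ≤ ((n:ℝ) * Real.exp (1/n))^n :=
          pow_le_pow_left₀ (by positivity) h2 n
        have h4 : ((n:ℝ) * Real.exp (1/n))^n = n^n * Real.exp 1 := by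
          rw [mul_pow, ← Real.exp_nat_mul]
          congr 2
          field_simp
        have h5 : Real.exp 1 ≤ 4 := by
          have := Real.exp_one_lt_d9; linarith
        have h6 : (0:ℝ) ≤ (n:ℝ)^n := by positivity
        nlinarith
    have hfac : (0:ℝ) ≤ (n.factorial : ℝ) := by positivity
    have h4n : (0:ℝ) ≤ (4:ℝ)^n := by positivity
    have hnn : (0:ℝ) ≤ (n:ℝ)+1 := by positivity
    calc ((↑(n+1)):ℝ)^(n+1) = ((n:ℝ)+1) * ((n:ℝ)+1)^n := by push_cast; ring
    _ ≤ ((n:ℝ)+1) * (4 * (n:ℝ)^n) := by nlinarith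
    _ ≤ ((n:ℝ)+1) * (4 * (4^n * n.factorial)) := by nlinarith
    _ = 4^(n+1) * ((n+1).factorial) := by push_cast [Nat.factorial_succ]; ring

lemma abs_neg_pow (b r : ℕ) : |(-(2:ℝ) ^ (-(b:ℤ))) ^ r| = (2:ℝ) ^ (-((r:ℤ) * b)) := by
  rw [abs_pow, abs_neg, abs_of_pos (by positivity), ← zpow_natCast ((2:ℝ) ^ (-(b:ℤ))),
    ← zpow_mul]
  congr 1
  ring

/-- for `r ≥ 0` and `0 ≤ k < N`, `|β_{r,k}| ≤ 2^(-rb)` and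
`|α_{r,k}| ≤ 2^(-r(b-2))`. -/
theorem alpha_beta_coeff_bounds (b N : ℕ) (hb : 4 ≤ b) (hN : 3 ≤ N)
    (r k : ℕ) (hk : k < N) :
    |betaC b N r k| ≤ (2:ℝ) ^ (-((r : ℤ) * b)) ∧
    |alphaC b N r k| ≤ (2:ℝ) ^ (-((r : ℤ) * ((b : ℤ) - 2))) := by
  have hN0 : (0:ℝ) < N := by positivity
  have hkR : (k:ℝ) < N := by exact_mod_cast hk
  have hk0 : (0:ℝ) ≤ k := Nat.cast_nonneg k
  constructor
  · -- beta
    rw [betaC, abs_mul, abs_neg_pow]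
    have hg : |gbc (-(k : ℝ) / N) r| ≤ 1 := by
      rw [gbc, abs_div, abs_of_nonneg (show (0:ℝ) ≤ (r.factorial:ℝ) by positivity),
        div_le_one (by positivity)]
      rw [Finset.abs_prod]
      calc ∏ j ∈ Finset.range r, |(-(k:ℝ)/N - j)|
          ≤ ∏ j ∈ Finset.range r, ((j:ℝ)+1) := by
            apply Finset.prod_le_prod (fun j _ => abs_nonneg _)
            intro j _
            have hnd : -(k:ℝ)/N = -((k:ℝ)/N) := by ring
            have h0 : (0:ℝ) ≤ (k:ℝ)/N := by positivity
            have hj0 : (0:ℝ) ≤ (j:ℝ) := Nat.cast_nonneg j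
            have h1 : -(k:ℝ)/N - j ≤ 0 := by rw [hnd]; linarith
            rw [abs_of_nonpos h1, hnd]
            have : (k:ℝ)/N ≤ 1 := by rw [div_le_one hN0]; linarith
            linarith
      _ = (r.factorial : ℝ) := by
            rw [← Finset.prod_range_add_one_eq_factorial, Nat.cast_prod]
            push_cast
            rfl
    calc |gbc (-(k : ℝ) / N) r| * (2:ℝ) ^ (-((r:ℤ) * b))
        ≤ 1 * (2:ℝ) ^ (-((r:ℤ) * b)) := by
          apply mul_le_mul_of_nonneg_right hg (by positivity)
    _ = (2:ℝ) ^ (-((r:ℤ) * b)) := one_mul _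
  · -- alpha
    rcases Nat.eq_zero_or_pos r with hr | hr
    · subst hr; simp [alphaC]
    have hrne : r ≠ 0 := Nat.pos_iff_ne_zero.mp hr
    have hrR : (1:ℝ) ≤ r := by exact_mod_cast hr
    set m := r - 1 with hm
    have hrm : r = m + 1 := (Nat.succ_pred_eq_of_pos hr).symm
    set x : ℝ := ((k : ℝ) + r) / N - 1 with hx
    have hNR : (3:ℝ) ≤ N := by exact_mod_cast hN
    have hrN : (r:ℝ) ≤ (r:ℝ) * N :=
      le_mul_of_one_le_right (by positivity) (by linarith)
    have hx_ub : x ≤ (r:ℝ) := by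
      rw [hx, sub_le_iff_le_add, div_le_iff₀ hN0]
      nlinarith
    have hx_lb : (-1:ℝ) ≤ x := by
      rw [hx]
      have : (0:ℝ) ≤ ((k:ℝ) + r)/N := by positivity
      linarith
    have habs : ∀ j ∈ Finset.range m, |x - (j:ℝ)| ≤ (r:ℝ) := by
      intro j hj
      have hj' : (j:ℝ) + 1 ≤ (m:ℝ) := by
        have := Finset.mem_range.mp hj
        exact_mod_cast this
      have hmR : (m:ℝ) = (r:ℝ) - 1 := by
        rw [hrm]; push_cast; ring
      have hj0 : (0:ℝ) ≤ j := Nat.cast_nonneg j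
      rw [abs_le]
      constructor
      · linarith
      · linarith
    have hg : |gbc x m| ≤ (r:ℝ)^m / (m.factorial : ℝ) := by
      rw [gbc, abs_div, abs_of_nonneg (show (0:ℝ) ≤ (m.factorial:ℝ) by positivity)]
      apply div_le_div_of_nonneg_right _ (by positivity)
      · rw [Finset.abs_prod]
        calc ∏ j ∈ Finset.range m, |x - (j:ℝ)|
            ≤ ∏ _j ∈ Finset.range m, (r:ℝ) :=
              Finset.prod_le_prod (fun j _ => abs_nonneg _) habs
        _ = (r:ℝ)^m := by rw [Finset.prod_const, Finset.card_range]
    have hcoef : |(k : ℝ) / (r * N)| ≤ 1 / r := by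
      rw [abs_of_nonneg (by positivity), div_le_div_iff₀ (by positivity) (by positivity)]
      nlinarith
    have hmain : |(k : ℝ) / (r * N)| * |gbc x m| ≤ 4^r := by
      have h1 : |(k : ℝ) / (r * N)| * |gbc x m| ≤ (1/r) * ((r:ℝ)^m / (m.factorial : ℝ)) :=
        mul_le_mul hcoef hg (abs_nonneg _) (by positivity)
      have h2 : (1/(r:ℝ)) * ((r:ℝ)^m / (m.factorial : ℝ)) ≤ 4^r := by
        rw [div_mul_eq_mul_div, one_mul, div_div, div_le_iff₀ (by positivity)]
        have hfact : (r:ℝ) * (m.factorial : ℝ) = (r.factorial : ℝ) := by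
          rw [hrm, Nat.factorial_succ]; push_cast; ring
        calc (r:ℝ)^m ≤ (r:ℝ)^r := pow_le_pow_right₀ hrR (by omega)
        _ ≤ 4^r * (r.factorial : ℝ) := pow_le_four_pow_mul_factorial r
        _ = 4^r * ((m.factorial : ℝ) * r) := by rw [← hfact]; ring
      linarith
    rw [alphaC, if_neg hrne, abs_mul, abs_mul, abs_neg_pow]
    have hpow : (2:ℝ) ^ (-((r : ℤ) * ((b : ℤ) - 2))) = 4^r * (2:ℝ) ^ (-((r:ℤ) * b)) := by
      have h4 : (4:ℝ)^r = (2:ℝ) ^ ((2 * r : ℕ) : ℤ) := by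
        rw [zpow_natCast, pow_mul]; norm_num
      rw [h4, ← zpow_add₀ (two_ne_zero)]
      congr 1
      push_cast
      ring
    rw [hpow]
    apply mul_le_mul_of_nonneg_right _ (by positivity)
    calc |(k : ℝ) / (↑r * ↑N)| * |gbc (((k:ℝ) + ↑r) / ↑N - 1) (r - 1)|
        = |(k : ℝ) / (r * N)| * |gbc x m| := by rw [hx, hm]
    _ ≤ 4^r := hmain
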